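/- Let z : Fin L → ℝ and let S ∈ Fin L be a ground-truth label. Define the temperature-scaled negative log-likelihood G(α) = −log(softmax(α·z)_S) for α ≥ 0. Then G'(α) = −(z_S − ∑_l z_l · softmax(α·z)_l). Consequently: (a) if z_S ≤ (1/L)∑_l z_l then G is non-decreasing on [0,∞) and its minimum over α ≥ 0 is attained at α = 0; (b) if z_S > (1/L)∑_l z_l then there exists a unique α* > 0 with ∑_l z_l · softmax(α*·z)_l = z_S, and G attains its minimum over [0,∞) at α*. -/

import Mathlib

open Real Finset Filter

noncomputable def softmax {L : ℕ} (v : Fin L → ℝ) (l : Fin L) : ℝ :=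
  Real.exp (v l) / ∑ j, Real.exp (v j)

noncomputable def entropy {L : ℕ} (q : Fin L → ℝ) : ℝ :=
  -∑ l, q l * Real.log (q l)

section Aux
variable {L : ℕ} (z : Fin L → ℝ)

noncomputable def Dz (α : ℝ) : ℝ := ∑ j, Real.exp (α * z j)
noncomputable def Nz (α : ℝ) : ℝ := ∑ j, z j * Real.exp (α * z j)
noncomputable def hz (α : ℝ) : ℝ := Nz z α / Dz z α

lemma Dz_pos (hL : 0 < L) (α : ℝ) : 0 < Dz z α := by
  have : Nonempty (Fin L) := ⟨⟨0, hL⟩⟩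
  exact Finset.sum_pos (fun j _ => Real.exp_pos _) Finset.univ_nonempty

lemma hasDerivAt_Dz (α : ℝ) : HasDerivAt (Dz z) (Nz z α) α := by
  have h : HasDerivAt (fun a => ∑ j, Real.exp (a * z j))
      (∑ j, Real.exp (α * z j) * z j) α :=
    HasDerivAt.fun_sum fun j _ => (hasDerivAt_mul_const (z j)).exp
  have : (∑ j, Real.exp (α * z j) * z j) = Nz z α := by
    unfold Nz; exact Finset.sum_congr rfl fun j _ => mul_comm _ _
  exact this ▸ h

lemma hasDerivAt_Nz (α : ℝ) :
    HasDerivAt (Nz z) (∑ j, z j ^ 2 * Real.exp (α * z j)) α := by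
  have h : HasDerivAt (fun a => ∑ j, z j * Real.exp (a * z j))
      (∑ j, z j * (Real.exp (α * z j) * z j)) α :=
    HasDerivAt.fun_sum fun j _ => ((hasDerivAt_mul_const (z j)).exp).const_mul (z j)
  have : (∑ j, z j * (Real.exp (α * z j) * z j)) = ∑ j, z j ^ 2 * Real.exp (α * z j) := by
    exact Finset.sum_congr rfl fun j _ => by ring
  exact this ▸ h

lemma hasDerivAt_hz (hL : 0 < L) (α : ℝ) :
    HasDerivAt (hz z) ((∑ l, Real.exp (α * z l) * (z l - hz z α) ^ 2) / Dz z α) α := by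
  have hD := Dz_pos z hL α
  have h := (hasDerivAt_Nz z α).div (hasDerivAt_Dz z α) hD.ne'
  have key : (∑ l, Real.exp (α * z l) * (z l - hz z α) ^ 2) / Dz z α
      = ((∑ j, z j ^ 2 * Real.exp (α * z j)) * Dz z α - Nz z α * Nz z α) / Dz z α ^ 2 := by
    have expand : (∑ l, Real.exp (α * z l) * (z l - hz z α) ^ 2)
        = (∑ j, z j ^ 2 * Real.exp (α * z j)) - 2 * hz z α * Nz z α + hz z α ^ 2 * Dz z α := by
      unfold Nz Dz
      rw [Finset.mul_sum, Finset.mul_sum, ← Finset.sum_sub_distrib, ← Finset.sum_add_distrib]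
      exact Finset.sum_congr rfl fun j _ => by ring
    rw [expand]
    unfold hz
    field_simp
    simp only [mul_comm (z _) α]
    ring
  rw [key]
  exact h
end Aux

section Aux2
variable {L : ℕ} (z : Fin L → ℝ)

lemma softmax_eq (α : ℝ) (S : Fin L) :
    softmax (fun l => α * z l) S = Real.exp (α * z S) / Dz z α := rfl

lemma sum_mul_softmax (hL : 0 < L) (α : ℝ) :
    (∑ l, z l * softmax (fun l => α * z l) l) = hz z α := by
  unfold hz Nz
  rw [Finset.sum_div]
  exact Finset.sum_congr rfl fun l _ => by rw [softmax_eq, mul_div_assoc]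

lemma G_eq (hL : 0 < L) (S : Fin L) :
    (fun α : ℝ => -Real.log (softmax (fun l => α * z l) S))
      = fun α => Real.log (Dz z α) - α * z S := by
  funext α
  rw [softmax_eq, Real.log_div (Real.exp_ne_zero _) (Dz_pos z hL α).ne', Real.log_exp]
  ring

lemma hasDerivAt_G (hL : 0 < L) (S : Fin L) (α : ℝ) :
    HasDerivAt (fun α => Real.log (Dz z α) - α * z S) (hz z α - z S) α :=
  ((hasDerivAt_Dz z α).log (Dz_pos z hL α).ne').sub (hasDerivAt_mul_const (z S))

lemma deriv_hz_nonneg (hL : 0 < L) (α : ℝ) :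
    0 ≤ (∑ l, Real.exp (α * z l) * (z l - hz z α) ^ 2) / Dz z α :=
  div_nonneg (Finset.sum_nonneg fun l _ => mul_nonneg (Real.exp_pos _).le (sq_nonneg _))
    (Dz_pos z hL α).le

lemma hz_monotone (hL : 0 < L) : Monotone (hz z) := by
  apply monotone_of_deriv_nonneg
  · exact fun α => (hasDerivAt_hz z hL α).differentiableAt
  · intro α
    rw [(hasDerivAt_hz z hL α).deriv]
    exact deriv_hz_nonneg z hL α

lemma hz_zero (hL : 0 < L) : hz z 0 = (1 / (L : ℝ)) * ∑ l, z l := by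
  unfold hz Nz Dz
  simp [Real.exp_zero, Finset.card_univ]
  rw [div_eq_mul_inv, mul_comm, inv_eq_one_div]

lemma hz_strictMono (hL : 0 < L) (j k : Fin L) (hjk : z j ≠ z k) :
    StrictMono (hz z) := by
  apply strictMono_of_deriv_pos
  intro α
  rw [(hasDerivAt_hz z hL α).deriv]
  apply div_pos _ (Dz_pos z hL α)
  have hne : z j ≠ hz z α ∨ z k ≠ hz z α := by
    by_contra h
    push_neg at h
    exact hjk (h.1.trans h.2.symm)
  obtain hl | hl := hne
  · exact Finset.sum_pos' (fun l _ => mul_nonneg (Real.exp_pos _).le (sq_nonneg _))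
      ⟨j, Finset.mem_univ _, mul_pos (Real.exp_pos _) (by have := sub_ne_zero.mpr hl; positivity)⟩
  · exact Finset.sum_pos' (fun l _ => mul_nonneg (Real.exp_pos _).le (sq_nonneg _))
      ⟨k, Finset.mem_univ _, mul_pos (Real.exp_pos _) (by have := sub_ne_zero.mpr hl; positivity)⟩
end Aux2

section Aux3
variable {L : ℕ} (z : Fin L → ℝ)

lemma hz_lower (hL : 0 < L) (α : ℝ) (M : ℝ) (hM : ∀ j, z j ≤ M) (j0 : Fin L)
    (hj0 : z j0 = M) :
    M - (∑ j, (M - z j) * Real.exp (α * (z j - M))) ≤ hz z α := by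
  have hD := Dz_pos z hL α
  have hDM : Real.exp (α * M) ≤ Dz z α := by
    have := Finset.single_le_sum (f := fun j => Real.exp (α * z j))
      (fun j _ => (Real.exp_pos _).le) (Finset.mem_univ j0)
    rw [hj0] at this
    exact this
  have h1 : M - hz z α = (∑ j, (M - z j) * Real.exp (α * z j)) / Dz z α := by
    unfold hz Nz
    rw [eq_div_iff hD.ne', sub_mul, div_mul_cancel₀ _ hD.ne']
    unfold Dz
    rw [Finset.mul_sum, ← Finset.sum_sub_distrib]
    exact Finset.sum_congr rfl fun j _ => by ring
  have hnum : 0 ≤ ∑ j, (M - z j) * Real.exp (α * z j) :=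
    Finset.sum_nonneg fun j _ => mul_nonneg (sub_nonneg.mpr (hM j)) (Real.exp_pos _).le
  have h2 : (∑ j, (M - z j) * Real.exp (α * z j)) / Dz z α
      ≤ (∑ j, (M - z j) * Real.exp (α * z j)) / Real.exp (α * M) :=
    div_le_div_of_nonneg_left hnum (Real.exp_pos _) hDM
  have h3 : (∑ j, (M - z j) * Real.exp (α * z j)) / Real.exp (α * M)
      = ∑ j, (M - z j) * Real.exp (α * (z j - M)) := by
    rw [Finset.sum_div]
    refine Finset.sum_congr rfl fun j _ => ?_
    rw [mul_div_assoc, ← Real.exp_sub, mul_sub]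
  rw [h3] at h2
  linarith

lemma tendsto_tail (M : ℝ) (hM : ∀ j, z j ≤ M) :
    Tendsto (fun α => ∑ j, (M - z j) * Real.exp (α * (z j - M))) atTop (nhds 0) := by
  have h : Tendsto (fun α => ∑ j : Fin L, (M - z j) * Real.exp (α * (z j - M))) atTop
      (nhds (∑ _j : Fin L, (0 : ℝ))) := by
    apply tendsto_finset_sum
    intro j _
    by_cases hj : z j = M
    · simpa [hj] using (tendsto_const_nhds : Tendsto (fun _ : ℝ => (0:ℝ)) atTop (nhds 0))
    · have hlt : z j - M < 0 := sub_neg.mpr (lt_of_le_of_ne (hM j) hj)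
      have h1 : Tendsto (fun α : ℝ => α * (z j - M)) atTop atBot :=
        tendsto_id.atTop_mul_const_of_neg hlt
      have := (Real.tendsto_exp_atBot.comp h1).const_mul (M - z j)
      simpa using this
  simpa using h

end Aux3


theorem nll_temperature_minimizer {L : ℕ} (hL : 0 < L) (z : Fin L → ℝ) (S : Fin L) :
    (∀ α : ℝ, HasDerivAt (fun a : ℝ => -Real.log (softmax (fun l => a * z l) S))
        (-(z S - ∑ l, z l * softmax (fun l => α * z l) l)) α) ∧
    ((z S ≤ (1 / (L : ℝ)) * ∑ l, z l) →
      MonotoneOn (fun α : ℝ => -Real.log (softmax (fun l => α * z l) S)) (Set.Ici 0) ∧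
      ∀ α : ℝ, 0 ≤ α →
        -Real.log (softmax (fun l => (0 : ℝ) * z l) S) ≤
          -Real.log (softmax (fun l => α * z l) S)) ∧
    (((1 / (L : ℝ)) * ∑ l, z l < z S ∧
        z S < Finset.univ.sup' ⟨⟨0, hL⟩, Finset.mem_univ _⟩ z) →
      ∃! αs : ℝ, 0 < αs ∧ (∑ l, z l * softmax (fun l => αs * z l) l) = z S ∧
        ∀ α : ℝ, 0 ≤ α →
          -Real.log (softmax (fun l => αs * z l) S) ≤
            -Real.log (softmax (fun l => α * z l) S)) := by
  have hG := G_eq z hL S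
  have hGfun : ∀ a : ℝ, -Real.log (softmax (fun l => a * z l) S)
      = Real.log (Dz z a) - a * z S := fun a => congrFun hG a
  have hGd : ∀ x : ℝ, HasDerivAt (fun α => Real.log (Dz z α) - α * z S) (hz z x - z S) x :=
    hasDerivAt_G z hL S
  have hGdiff : Differentiable ℝ (fun α => Real.log (Dz z α) - α * z S) :=
    fun x => (hGd x).differentiableAt
  have hGc : Continuous (fun α => Real.log (Dz z α) - α * z S) := hGdiff.continuous
  refine ⟨?_, ?_, ?_⟩
  · intro α
    rw [hG, sum_mul_softmax z hL α]
    have := hGd α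
    convert this using 1
    ring
  · intro hmean
    have hmono : MonotoneOn (fun α : ℝ => -Real.log (softmax (fun l => α * z l) S))
        (Set.Ici 0) := by
      rw [hG]
      apply monotoneOn_of_deriv_nonneg (convex_Ici 0) hGc.continuousOn
        (fun x _ => (hGd x).differentiableAt.differentiableWithinAt)
      intro x hx
      rw [interior_Ici] at hx
      rw [(hGd x).deriv]
      have h0 : hz z 0 ≤ hz z x := hz_monotone z hL (le_of_lt hx)
      rw [hz_zero z hL] at h0
      linarith
    refine ⟨hmono, fun α hα => ?_⟩
    exact hmono Set.self_mem_Ici (Set.mem_Ici.mpr hα) hα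
  · rintro ⟨h1, h2⟩
    set M := Finset.univ.sup' ⟨⟨0, hL⟩, Finset.mem_univ _⟩ z with hMdef
    obtain ⟨j0, -, hj0⟩ := Finset.exists_mem_eq_sup'
      (⟨⟨0, hL⟩, Finset.mem_univ _⟩ : (Finset.univ : Finset (Fin L)).Nonempty) z
    have hMle : ∀ j, z j ≤ M := fun j => Finset.le_sup' z (Finset.mem_univ j)
    have hLpos : (0 : ℝ) < L := Nat.cast_pos.mpr hL
    -- nonconstancy witness
    have hex : ∃ l0, z l0 < z S := by
      by_contra h
      push_neg at h
      have hsum : (L : ℝ) * z S ≤ ∑ l, z l := by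
        calc (L : ℝ) * z S = ∑ _l : Fin L, z S := by
              rw [Finset.sum_const, Finset.card_univ, Fintype.card_fin, nsmul_eq_mul]
          _ ≤ ∑ l, z l := Finset.sum_le_sum fun l _ => h l
      have : z S ≤ (1 / (L : ℝ)) * ∑ l, z l := by
        rw [one_div, inv_mul_eq_div, le_div_iff₀ hLpos]
        linarith
      linarith
    obtain ⟨l0, hl0⟩ := hex
    have hsm : StrictMono (hz z) := hz_strictMono z hL l0 S (ne_of_lt hl0)
    -- find A with hz z A > z S
    have hev : ∀ᶠ α in atTop,
        (∑ j, (M - z j) * Real.exp (α * (z j - M))) < M - z S :=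
      (tendsto_tail z M hMle).eventually_lt_const (sub_pos.mpr h2)
    obtain ⟨A, hAlt, hA0⟩ := (hev.and (eventually_gt_atTop (0 : ℝ))).exists
    have hAS : z S < hz z A := by
      have := hz_lower z hL A M hMle j0 hj0.symm
      linarith
    -- IVT
    have h0S : hz z 0 < z S := by rw [hz_zero z hL]; exact h1
    have hcd : Differentiable ℝ (hz z) := fun x => (hasDerivAt_hz z hL x).differentiableAt
    have hc : Continuous (hz z) := hcd.continuous
    obtain ⟨αs, hαs_mem, hαs_eq⟩ :=
      intermediate_value_Ioo hA0.le hc.continuousOn (Set.mem_Ioo.mpr ⟨h0S, hAS⟩)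
    -- minimizer
    have hmin : ∀ α : ℝ, 0 ≤ α →
        Real.log (Dz z αs) - αs * z S ≤ Real.log (Dz z α) - α * z S := by
      intro α hα
      rcases le_total α αs with hle | hle
      · have hant : AntitoneOn (fun α => Real.log (Dz z α) - α * z S) (Set.Icc 0 αs) := by
          apply antitoneOn_of_deriv_nonpos (convex_Icc 0 αs) hGc.continuousOn
            (fun x _ => (hGd x).differentiableAt.differentiableWithinAt)
          intro x hx
          rw [interior_Icc] at hx
          rw [(hGd x).deriv]
          have : hz z x ≤ hz z αs := hsm.monotone hx.2.le
          rw [hαs_eq] at this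
          linarith
        exact hant ⟨hα, hle⟩ ⟨hαs_mem.1.le, le_refl _⟩ hle
      · have hmono' : MonotoneOn (fun α => Real.log (Dz z α) - α * z S) (Set.Ici αs) := by
          apply monotoneOn_of_deriv_nonneg (convex_Ici αs) hGc.continuousOn
            (fun x _ => (hGd x).differentiableAt.differentiableWithinAt)
          intro x hx
          rw [interior_Ici] at hx
          rw [(hGd x).deriv]
          have : hz z αs ≤ hz z x := hsm.monotone hx.le
          rw [hαs_eq] at this
          linarith
        exact hmono' Set.self_mem_Ici (Set.mem_Ici.mpr hle) hle
    refine ⟨αs, ⟨hαs_mem.1, ?_, ?_⟩, ?_⟩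
    · rw [sum_mul_softmax z hL]
      exact hαs_eq
    · intro α hα
      rw [hGfun αs, hGfun α]
      exact hmin α hα
    · rintro β ⟨hβ0, hβeq, -⟩
      rw [sum_mul_softmax z hL] at hβeq
      exact hsm.injective (hβeq.trans hαs_eq.symm)
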